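/- Let (γ_n) be an orthonormal basis of L²(Ω) and h a measurable bijection such that (C_h γ_n) is a Riesz basis of L²(Ω). Then for every f in L²(Ω), f = Σ_n ⟨f, g_{h⁻¹}·(γ_n ∘ h)⟩ (γ_n ∘ h), i.e., (M_{g_{h⁻¹}} C_h γ_n) is the bi-orthogonal dual Riesz basis of (C_h γ_n). -/

import Mathlib

open MeasureTheory ENNReal

/-- Lebesgue measure on a subset `Ω` of `ℝ^d`, viewed as a measure on the subtype. -/
noncomputable def lebOn {d : ℕ} (Ω : Set (EuclideanSpace ℝ (Fin d))) : Measure Ω :=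
  (volume : Measure (EuclideanSpace ℝ (Fin d))).comap Subtype.val

/-- A sequence is a Riesz basis if it is the image of an orthonormal (Hilbert) basis
under a bounded bijective operator. -/
def IsRieszBasis {H : Type*} [NormedAddCommGroup H] [InnerProductSpace ℝ H]
    [CompleteSpace H] (φ : ℕ → H) : Prop :=
  ∃ (γ : HilbertBasis ℕ ℝ H) (U : H ≃L[ℝ] H), ∀ n, φ n = U (γ n)

set_option maxHeartbeats 1000000 in
set_option synthInstance.maxHeartbeats 1000000 in
theorem dual_Riesz_expansion
    {d : ℕ} (Ω : Set (EuclideanSpace ℝ (Fin d))) (hΩ : IsOpen Ω)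
    (h ζ : Ω → Ω) (hm : Measurable h) (hmζ : Measurable ζ)
    (hζh : ∀ x, ζ (h x) = x) (hhζ : ∀ x, h (ζ x) = x)
    (hacζ : (lebOn Ω).map ζ ≪ lebOn Ω)
    (γ : HilbertBasis ℕ ℝ (Lp ℝ 2 (lebOn Ω)))
    (T : Lp ℝ 2 (lebOn Ω) →L[ℝ] Lp ℝ 2 (lebOn Ω))
    (hT : ∀ f : Lp ℝ 2 (lebOn Ω), (T f : Ω → ℝ) =ᵐ[lebOn Ω] fun x => f (h x))
    (hRiesz : IsRieszBasis (fun n => T (γ n))) :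
    ∀ f : Lp ℝ 2 (lebOn Ω),
      HasSum (fun n : ℕ =>
        (∫ x, f x * (((lebOn Ω).map ζ).rnDeriv (lebOn Ω) x).toReal *
            (γ n) (h x) ∂(lebOn Ω)) • T (γ n)) f := by
  classical
  intro f
  -- σ-finiteness of lebOn Ω
  have hΩm : MeasurableSet Ω := hΩ.measurableSet
  have hemb : MeasurableEmbedding (Subtype.val : Ω → EuclideanSpace ℝ (Fin d)) :=
    MeasurableEmbedding.subtype_coe hΩm
  have hmapvol : (lebOn Ω).map Subtype.val = volume.restrict Ω := by
    rw [lebOn, hemb.map_comap, Subtype.range_coe]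
  haveI hsf : SigmaFinite (lebOn Ω) := by
    refine SigmaFinite.of_map _ hemb.measurable.aemeasurable ?_
    rw [hmapvol]; infer_instance
  -- ζ as a measurable equivalence
  let ζe : Ω ≃ᵐ Ω :=
    { toFun := ζ, invFun := h, left_inv := hhζ, right_inv := hζh,
      measurable_toFun := hmζ, measurable_invFun := hm }
  haveI hsfm : SigmaFinite ((lebOn Ω).map ζ) := ζe.sigmaFinite_map (μ := lebOn Ω)
  -- The operator T is realized by a continuous linear equivalence A
  obtain ⟨γ', U, hU⟩ := hRiesz
  let W : Lp ℝ 2 (lebOn Ω) ≃L[ℝ] Lp ℝ 2 (lebOn Ω) :=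
    (γ.repr.trans γ'.repr.symm).toContinuousLinearEquiv
  let A : Lp ℝ 2 (lebOn Ω) ≃L[ℝ] Lp ℝ 2 (lebOn Ω) := W.trans U
  have hA : ∀ n, A (γ n) = T (γ n) := by
    intro n
    have h1 : γ'.repr.symm (lp.single 2 n (1 : ℝ)) = γ' n := by
      rw [← γ'.repr_self n, LinearIsometryEquiv.symm_apply_apply]
    have h2 : W (γ n) = γ' n := by
      simp only [W, LinearIsometryEquiv.coe_toContinuousLinearEquiv,
        LinearIsometryEquiv.trans_apply, γ.repr_self, h1]
    have h3 : A (γ n) = U (W (γ n)) := rfl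
    rw [h3, h2, ← hU n]
  have hTA : T = (A : Lp ℝ 2 (lebOn Ω) →L[ℝ] Lp ℝ 2 (lebOn Ω)) := by
    apply ContinuousLinearMap.ext_on
      (Submodule.dense_iff_topologicalClosure_eq_top.mpr γ.dense_span)
    rintro x ⟨n, rfl⟩
    exact (hA n).symm
  set e : Lp ℝ 2 (lebOn Ω) := A.symm f with he
  have hTe : T e = f := by
    rw [hTA]
    exact A.apply_symm_apply f
  -- a.e. identities
  have hf1 : (f : Ω → ℝ) =ᵐ[lebOn Ω] fun x => e (h x) := by
    have h4 := hT e
    rwa [hTe] at h4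
  have qmp : Measure.QuasiMeasurePreserving ζ (lebOn Ω) (lebOn Ω) := ⟨hmζ, hacζ⟩
  have hfζ : (fun x => f (ζ x)) =ᵐ[lebOn Ω] (e : Ω → ℝ) := by
    have h2 : ((f : Ω → ℝ) ∘ ζ) =ᵐ[lebOn Ω] ((fun x => e (h x)) ∘ ζ) := qmp.ae_eq_comp hf1
    refine h2.trans ?_
    filter_upwards with x
    simp [Function.comp, hhζ x]
  -- compute the coefficients
  have hcoef : ∀ n, (∫ x, f x * (((lebOn Ω).map ζ).rnDeriv (lebOn Ω) x).toReal
        * (γ n) (h x) ∂(lebOn Ω)) = γ.repr e n := by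
    intro n
    have hγh : AEStronglyMeasurable (fun x => (γ n) (h x)) (lebOn Ω) :=
      (Lp.aestronglyMeasurable (T (γ n))).congr (hT (γ n))
    have hmeas : AEStronglyMeasurable (fun x => f x * (γ n) (h x)) (lebOn Ω) :=
      (Lp.aestronglyMeasurable f).mul hγh
    have step1 : (∫ x, f x * (((lebOn Ω).map ζ).rnDeriv (lebOn Ω) x).toReal
          * (γ n) (h x) ∂(lebOn Ω))
        = ∫ x, (((lebOn Ω).map ζ).rnDeriv (lebOn Ω) x).toReal
            • (f x * (γ n) (h x)) ∂(lebOn Ω) := by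
      refine integral_congr_ae ?_
      filter_upwards with x
      rw [smul_eq_mul]; ring
    have step2 : (∫ x, (((lebOn Ω).map ζ).rnDeriv (lebOn Ω) x).toReal
            • (f x * (γ n) (h x)) ∂(lebOn Ω))
        = ∫ x, f x * (γ n) (h x) ∂((lebOn Ω).map ζ) :=
      integral_rnDeriv_smul hacζ
    have step3 : (∫ x, f x * (γ n) (h x) ∂((lebOn Ω).map ζ))
        = ∫ x, f (ζ x) * (γ n) (h (ζ x)) ∂(lebOn Ω) :=
      integral_map hmζ.aemeasurable (hmeas.mono_ac hacζ)
    have step4 : (∫ x, f (ζ x) * (γ n) (h (ζ x)) ∂(lebOn Ω))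
        = ∫ x, e x * (γ n) x ∂(lebOn Ω) := by
      refine integral_congr_ae ?_
      filter_upwards [hfζ] with x hx
      rw [hhζ x, hx]
    have step5 : (∫ x, e x * (γ n) x ∂(lebOn Ω)) = inner (𝕜 := ℝ) e (γ n) := by
      rw [L2.inner_def]
      refine integral_congr_ae ?_
      filter_upwards with x
      simp [RCLike.inner_apply]; ring
    rw [step1, step2, step3, step4, step5, γ.repr_apply_apply, real_inner_comm]
  -- assemble
  have hsum : HasSum (fun n => γ.repr e n • γ n) e := γ.hasSum_repr e
  have hsum2 : HasSum (fun n => γ.repr e n • A (γ n)) f := by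
    have h5 := (A : Lp ℝ 2 (lebOn Ω) →L[ℝ] Lp ℝ 2 (lebOn Ω)).hasSum hsum
    simp only [ContinuousLinearMap.map_smul, ContinuousLinearEquiv.coe_coe] at h5
    rwa [he, A.apply_symm_apply] at h5
  have hfun : (fun n : ℕ => (∫ x, f x * (((lebOn Ω).map ζ).rnDeriv (lebOn Ω) x).toReal
        * (γ n) (h x) ∂(lebOn Ω)) • T (γ n))
      = fun n => γ.repr e n • A (γ n) := by
    funext n; rw [hcoef n, hA n]
  rw [hfun]
  exact hsum2
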